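/- Let R be a Prüfer domain and let φ : E → H be an R-linear map between finitely generated projective R-modules. Then the kernel of φ is a direct summand of E: there exists a submodule N of E with ker φ ⊓ N = ⊥ and ker φ ⊔ N = E (in particular ker φ is finitely generated projective). -/

import Mathlib

open Function LinearMap

section Aux

variable {R : Type*} [CommRing R] [IsDomain R]

/-- Finite-sum representation of an element of a product of ideals. -/
lemma aux_exists_repr {I J : Ideal R} {c : R} (h : c ∈ I * J) :
    ∃ (k : ℕ) (a b : Fin k → R), (∀ i, a i ∈ I) ∧ (∀ i, b i ∈ J) ∧ ∑ i, a i * b i = c := by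
  refine Submodule.mul_induction_on h ?_ ?_
  · intro m hm n hn
    exact ⟨1, fun _ => m, fun _ => n, fun _ => hm, fun _ => hn, by simp⟩
  · rintro x y ⟨k, a, b, ha, hb, hs⟩ ⟨k', a', b', ha', hb', hs'⟩
    refine ⟨k + k', Fin.append a a', Fin.append b b', ?_, ?_, ?_⟩
    · intro i
      refine Fin.addCases (fun j => ?_) (fun j => ?_) i
      · simpa [Fin.append_left] using ha j
      · simpa [Fin.append_right] using ha' j
    · intro i
      refine Fin.addCases (fun j => ?_) (fun j => ?_) i
      · simpa [Fin.append_left] using hb j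
      · simpa [Fin.append_right] using hb' j
    · rw [Fin.sum_univ_add]
      simp only [Fin.append_left, Fin.append_right, hs, hs']

/-- A finitely generated invertible ideal over a Prüfer domain is projective. -/
lemma aux_ideal_projective
    (hpruf : ∀ I : Ideal R, I.FG → I ≠ ⊥ →
      ∃ (J : Ideal R) (c : R), J.FG ∧ c ≠ 0 ∧ I * J = Ideal.span {c})
    (I : Ideal R) (hfg : I.FG) : Module.Projective R I := by
  by_cases hbot : I = ⊥
  · subst hbot
    have hsub : Subsingleton (⊥ : Ideal R) := by
      constructor
      rintro ⟨x, hx⟩ ⟨y, hy⟩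
      simp only [Ideal.mem_bot] at hx hy
      simp [hx, hy]
    have := Module.Free.of_subsingleton R (⊥ : Ideal R)
    infer_instance
  · obtain ⟨J, c, hJfg, hc, hIJ⟩ := hpruf I hfg hbot
    have hcmem : c ∈ I * J := by
      rw [hIJ]; exact Ideal.mem_span_singleton_self c
    obtain ⟨k, a, b, ha, hb, hsum⟩ := aux_exists_repr hcmem
    -- for x ∈ I and each i, x * b i ∈ I * J = ⟨c⟩, so x * b i = r * c for some r
    have key : ∀ (x : I) (i : Fin k), ∃ r : R, r * c = (x : R) * b i := by
      intro x i
      have : (x : R) * b i ∈ I * J := Submodule.mul_mem_mul x.2 (hb i)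
      rw [hIJ] at this
      exact Ideal.mem_span_singleton'.mp this
    set r : I → Fin k → R := fun x i => (key x i).choose with hr_def
    have hr : ∀ (x : I) (i : Fin k), r x i * c = (x : R) * b i := fun x i => (key x i).choose_spec
    -- the "division" map I → Rᵏ
    let q : I →ₗ[R] (Fin k → R) :=
      { toFun := r
        map_add' := by
          intro x y
          funext i
          apply mul_right_cancel₀ hc
          simp only [Pi.add_apply]
          rw [add_mul, hr, hr, hr]
          push_cast
          ring
        map_smul' := by
          intro m x
          funext i
          apply mul_right_cancel₀ hc
          simp only [RingHom.id_apply, Pi.smul_apply, smul_eq_mul]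
          rw [hr, mul_assoc, hr, Submodule.coe_smul, smul_eq_mul, mul_assoc] }
    -- the evaluation map Rᵏ → I
    let g : (Fin k → R) →ₗ[R] I :=
      ∑ i : Fin k, (LinearMap.toSpanSingleton R I ⟨a i, ha i⟩).comp (LinearMap.proj i)
    have hg : ∀ v : Fin k → R, ((g v : I) : R) = ∑ i, v i * a i := by
      intro v
      simp only [g, LinearMap.sum_apply, LinearMap.comp_apply, LinearMap.proj_apply,
        LinearMap.toSpanSingleton_apply]
      rw [Submodule.coe_sum]
      simp [Submodule.coe_smul, smul_eq_mul]
    have hsplit : g.comp q = LinearMap.id := by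
      ext x
      simp only [LinearMap.comp_apply, LinearMap.id_apply]
      rw [hg]
      apply mul_right_cancel₀ hc
      rw [Finset.sum_mul]
      have : ∀ i ∈ Finset.univ, q x i * a i * c = (x : R) * (a i * b i) := by
        intro i _
        have : q x i * c = (x : R) * b i := hr x i
        calc q x i * a i * c = q x i * c * a i := by ring
          _ = (x : R) * b i * a i := by rw [this]
          _ = (x : R) * (a i * b i) := by ring
      rw [Finset.sum_congr rfl this, ← Finset.mul_sum, hsum]
    exact Module.Projective.of_split q g hsplit

/-- Every finite module embedding into a finite free module over a Prüfer domain
is projective. -/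
lemma aux_key
    (hpruf : ∀ I : Ideal R, I.FG → I ≠ ⊥ →
      ∃ (J : Ideal R) (c : R), J.FG ∧ c ≠ 0 ∧ I * J = Ideal.span {c}) :
    ∀ (n : ℕ) {M : Type*} [AddCommGroup M] [Module R M] [Module.Finite R M]
      (f : M →ₗ[R] (Fin n → R)), Injective f → Module.Projective R M := by
  intro n
  induction n with
  | zero =>
    intro M _ _ _ f hf
    have : Subsingleton M := ⟨fun x y => hf (Subsingleton.elim _ _)⟩
    have := Module.Free.of_subsingleton R M
    infer_instance
  | succ n ih =>
    intro M _ _ _ f hf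
    -- last coordinate
    set g : M →ₗ[R] R := (LinearMap.proj (Fin.last n)).comp f with hg_def
    set I : Ideal R := LinearMap.range g with hI_def
    have hIfg : I.FG := Module.Finite.iff_fg.mp (Module.Finite.range g)
    have hIproj : Module.Projective R I := aux_ideal_projective hpruf I hIfg
    set p : M →ₗ[R] I := g.rangeRestrict with hp_def
    have hpsurj : Surjective p := g.surjective_rangeRestrict
    obtain ⟨σ, hσ⟩ := Module.projective_lifting_property p LinearMap.id hpsurj
    have hpσ : ∀ y : I, p (σ y) = y := fun y => by simpa using LinearMap.congr_fun hσ y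
    -- kernel as a submodule, with retraction
    set K : Submodule R M := LinearMap.ker p with hK_def
    have hmemK : ∀ x : M, x - σ (p x) ∈ K := by
      intro x
      simp only [hK_def, LinearMap.mem_ker, map_sub, hpσ, sub_self]
    set rK : M →ₗ[R] K := (LinearMap.id - σ.comp p).codRestrict K
      (fun x => hmemK x) with hrK_def
    have hrK : ∀ x : K, rK (x : M) = x := by
      intro x
      apply Subtype.ext
      have hx : p (x : M) = 0 := x.2
      simp [hrK_def, hx]
    have hrKsurj : Surjective rK := fun x => ⟨(x : M), hrK x⟩
    haveI : Module.Finite R K := Module.Finite.of_surjective rK hrKsurj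
    -- K embeds into Rⁿ
    set j : K →ₗ[R] (Fin n → R) :=
      (LinearMap.pi fun i : Fin n => LinearMap.proj (R := R) i.castSucc).comp
        (f.comp K.subtype) with hj_def
    have hjinj : Injective j := by
      intro x y hxy
      apply Subtype.ext
      apply hf
      funext i
      refine Fin.lastCases ?_ (fun i => ?_) i
      · have hx : p (x : M) = 0 := x.2
        have hy : p (y : M) = 0 := y.2
        have hx' : g (x : M) = 0 := by
          have hmem : (x : M) ∈ LinearMap.ker g := by
            rw [← LinearMap.ker_rangeRestrict g]; exact hx
          exact hmem
        have hy' : g (y : M) = 0 := by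
          have hmem : (y : M) ∈ LinearMap.ker g := by
            rw [← LinearMap.ker_rangeRestrict g]; exact hy
          exact hmem
        simpa [hg_def] using hx'.trans hy'.symm
      · have := congrFun hxy i
        simpa [hj_def] using this
    haveI hKproj : Module.Projective R K := ih j hjinj
    -- split M as K × I
    haveI : Module.Projective R (K × I) := inferInstance
    refine Module.Projective.of_split (rK.prod p) (K.subtype.coprod σ) ?_
    ext x
    simp [hrK_def]

end Aux

/-- Over a Prüfer domain, the kernel of a linear map between finitely generated
projective modules is a direct summand (in particular finitely generated projective). -/
theorem stmt_9 {R : Type*} [CommRing R] [IsDomain R]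
    (hpruf : ∀ I : Ideal R, I.FG → I ≠ ⊥ →
      ∃ (J : Ideal R) (c : R), J.FG ∧ c ≠ 0 ∧ I * J = Ideal.span {c})
    {E H : Type*} [AddCommGroup E] [Module R E] [AddCommGroup H] [Module R H]
    [Module.Finite R E] [Module.Projective R E]
    [Module.Finite R H] [Module.Projective R H]
    (φ : E →ₗ[R] H) :
    (∃ N : Submodule R E, LinearMap.ker φ ⊓ N = ⊥ ∧ LinearMap.ker φ ⊔ N = ⊤) ∧
    Module.Finite R ↥(LinearMap.ker φ) ∧ Module.Projective R ↥(LinearMap.ker φ) := by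
  classical
  -- embed H into a finite free module
  obtain ⟨n, fH, gH, _, hginj, _⟩ := Module.Finite.exists_comp_eq_id_of_projective R H
  set M : Submodule R H := LinearMap.range φ with hM_def
  haveI : Module.Finite R M := Module.Finite.range φ
  -- the range is projective
  have hMproj : Module.Projective R M :=
    aux_key hpruf n (gH.comp M.subtype) (hginj.comp Subtype.val_injective)
  -- split the surjection E → range φ
  set p : E →ₗ[R] M := φ.rangeRestrict with hp_def
  have hpsurj : Function.Surjective p := φ.surjective_rangeRestrict
  obtain ⟨σ, hσ⟩ := Module.projective_lifting_property p LinearMap.id hpsurj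
  have hpσ : ∀ y : M, p (σ y) = y := fun y => by simpa using LinearMap.congr_fun hσ y
  have hφσ : ∀ y : M, φ (σ y) = (y : H) := by
    intro y
    have : ((p (σ y) : M) : H) = (y : H) := congrArg Subtype.val (hpσ y)
    simpa [hp_def] using this
  have hkerp : LinearMap.ker p = LinearMap.ker φ := LinearMap.ker_rangeRestrict φ
  -- the complement
  set N : Submodule R E := LinearMap.range σ with hN_def
  set fN : E →ₗ[R] N := (σ.comp p).codRestrict N (fun x => ⟨p x, rfl⟩) with hfN_def
  have hfNproj : ∀ x : N, fN (x : E) = x := by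
    rintro ⟨x, y, rfl⟩
    apply Subtype.ext
    show σ (p (σ y)) = σ y
    rw [hpσ]
  have hcompl : IsCompl N (LinearMap.ker fN) := LinearMap.isCompl_of_proj hfNproj
  have hσinj : Function.Injective σ := by
    intro a b hab
    have := congrArg p hab
    rwa [hpσ, hpσ] at this
  have hkerfN : LinearMap.ker fN = LinearMap.ker φ := by
    ext x
    simp only [hfN_def, LinearMap.mem_ker, LinearMap.codRestrict_apply,
      LinearMap.comp_apply]
    constructor
    · intro hx
      have hx' : σ (p x) = 0 := congrArg Subtype.val hx
      have hp0 : p x = 0 := by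
        apply hσinj
        rw [hx', map_zero]
      have hm : x ∈ LinearMap.ker p := hp0
      rwa [hkerp] at hm
    · intro hx
      apply Subtype.ext
      have hm : x ∈ LinearMap.ker p := by rw [hkerp]; exact hx
      have hp0 : p x = 0 := hm
      show σ (p x) = ((0 : N) : E)
      rw [hp0, map_zero, Submodule.coe_zero]
  -- kernel is finite and projective via the retraction
  have hmemK : ∀ x : E, x - σ (p x) ∈ LinearMap.ker φ := by
    intro x
    have : x - σ (p x) ∈ LinearMap.ker p := by
      simp [LinearMap.mem_ker, map_sub, hpσ]
    rwa [hkerp] at this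
  set rK : E →ₗ[R] (LinearMap.ker φ) := (LinearMap.id - σ.comp p).codRestrict
    (LinearMap.ker φ) (fun x => hmemK x) with hrK_def
  have hrK : ∀ x : (LinearMap.ker φ), rK (x : E) = x := by
    intro x
    apply Subtype.ext
    have hx : p (x : E) = 0 := by
      have hm : (x : E) ∈ LinearMap.ker p := by rw [hkerp]; exact x.2
      exact hm
    simp [hrK_def, hx]
  have hrKsurj : Function.Surjective rK := fun x => ⟨(x : E), hrK x⟩
  haveI hKfin : Module.Finite R (LinearMap.ker φ) := Module.Finite.of_surjective rK hrKsurj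
  have hKproj : Module.Projective R (LinearMap.ker φ) := by
    refine Module.Projective.of_split (LinearMap.ker φ).subtype rK ?_
    ext x
    exact congrArg Subtype.val (hrK x)
  refine ⟨⟨N, ?_, ?_⟩, hKfin, hKproj⟩
  · rw [← hkerfN, inf_comm]
    exact disjoint_iff.mp hcompl.disjoint
  · rw [← hkerfN, sup_comm]
    exact codisjoint_iff.mp hcompl.codisjoint
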